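/- Let C ⊆ ℕ be a cohesive set, and let L₀ = (ℕ, ≺₀) and L₁ = (ℕ, ≺₁) be computable linear orders. Let L₀ + L₁ denote the computable linear order on ℕ obtained (via a fixed computable pairing of {0,1} × ℕ with ℕ) by placing a copy of L₀ entirely below a copy of L₁. Then the cohesive power Π_C(L₀ + L₁) is order-isomorphic to the linear order sum Π_C L₀ + Π_C L₁. -/
import Mathlib


/-- `X ⊆* Y`: `X` is contained in `Y` up to finitely many elements. -/
def AlmostSubset (X Y : Set ℕ) : Prop := (X \ Y).Finite

/-- `W ⊆ ℕ` is computably enumerable: it is the domain of a partial computable function. -/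
def CESet (W : Set ℕ) : Prop := ∃ f : ℕ →. ℕ, Partrec f ∧ W = f.Dom

/-- `W ⊆ ℕ` is computable (decidable). -/
def ComputableSet (W : Set ℕ) : Prop :=
  ∃ f : ℕ → Bool, Computable f ∧ ∀ n, n ∈ W ↔ f n = true

/-- `C ⊆ ℕ` is cohesive: `C` is infinite, and for every c.e. set `W`, either `W ∩ C`
or `Wᶜ ∩ C` is finite. -/
def Cohesive (C : Set ℕ) : Prop :=
  C.Infinite ∧ ∀ W : Set ℕ, CESet W → (W ∩ C).Finite ∨ (Wᶜ ∩ C).Finite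

/-- `C ⊆ ℕ` is r-cohesive. -/
def RCohesive (C : Set ℕ) : Prop :=
  C.Infinite ∧ ∀ W : Set ℕ, ComputableSet W → (W ∩ C).Finite ∨ (Wᶜ ∩ C).Finite

/-- `C` is co-maximal: its complement is maximal, i.e. `C` is cohesive with c.e. complement. -/
def CoMaximal (C : Set ℕ) : Prop := Cohesive C ∧ CESet Cᶜ

/-- A computable (decidable) binary relation on `ℕ`. -/
def ComputableRel (r : ℕ → ℕ → Prop) : Prop :=
  ∃ f : ℕ → ℕ → Bool, Computable₂ f ∧ ∀ m n, r m n ↔ f m n = true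

/-- `y` is the immediate successor of `x` with respect to the strict order `r`. -/
def ImmSucc {α : Type*} (r : α → α → Prop) (x y : α) : Prop :=
  r x y ∧ ∀ z, ¬(r x z ∧ r z y)

/-- A strict order on `ℕ` has order type ω when it is isomorphic to `(ℕ, <)`. -/
def OrderTypeOmega (r : ℕ → ℕ → Prop) : Prop :=
  Nonempty (r ≃r ((· < ·) : ℕ → ℕ → Prop))

/-- Carrier of the cohesive power: partial computable functions whose domain
almost contains `C`. -/
def CohCarrier (C : Set ℕ) : Type :=
  {φ : ℕ →. ℕ // Partrec φ ∧ (C \ φ.Dom).Finite}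

/-- Two partial functions agree (are defined and equal) on almost all of `C`. -/
def eqAE (C : Set ℕ) (φ ψ : ℕ →. ℕ) : Prop :=
  (C \ {n | ∃ a, a ∈ φ n ∧ a ∈ ψ n}).Finite

/-- The equivalence relation underlying the cohesive power. -/
def cohSetoid (C : Set ℕ) : Setoid (CohCarrier C) where
  r φ ψ := eqAE C φ.1 ψ.1
  iseqv := by
    constructor
    · intro φ
      refine φ.2.2.subset fun n hn => ⟨hn.1, fun hd => hn.2 ?_⟩
      obtain ⟨a, ha⟩ := (PFun.mem_dom _ _).mp hd
      exact ⟨a, ha, ha⟩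
    · intro φ ψ h
      exact h.subset fun n hn => ⟨hn.1, fun ⟨a, h1, h2⟩ => hn.2 ⟨a, h2, h1⟩⟩
    · intro φ ψ χ h1 h2
      refine (h1.union h2).subset fun n hn => ?_
      by_cases hmem : ∃ a, a ∈ φ.1 n ∧ a ∈ ψ.1 n
      · obtain ⟨a, ha1, ha2⟩ := hmem
        refine Or.inr ⟨hn.1, fun ⟨b, hb1, hb2⟩ => hn.2 ⟨a, ha1, ?_⟩⟩
        rwa [Part.mem_unique ha2 hb1]
      · exact Or.inl ⟨hn.1, hmem⟩

/-- The domain of the cohesive power of a computable structure on `ℕ` over `C`. -/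
def CohPow (C : Set ℕ) : Type := Quotient (cohSetoid C)

/-- The class of a partial computable function in the cohesive power. -/
def CohPow.mk {C : Set ℕ} (φ : CohCarrier C) : CohPow C := Quotient.mk (cohSetoid C) φ

/-- `φ(n) ≺ ψ(n)` (both defined) for almost all `n ∈ C`. -/
def ltAE (C : Set ℕ) (r : ℕ → ℕ → Prop) (φ ψ : ℕ →. ℕ) : Prop :=
  (C \ {n | ∃ a b, a ∈ φ n ∧ b ∈ ψ n ∧ r a b}).Finite

/-- The order of the cohesive power of the computable linear order `(ℕ, r)` over `C`. -/
def CohPow.Lt (C : Set ℕ) (r : ℕ → ℕ → Prop) (x y : CohPow C) : Prop :=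
  ∃ φ ψ : CohCarrier C, x = CohPow.mk φ ∧ y = CohPow.mk ψ ∧ ltAE C r φ.1 ψ.1

/-- The sum `L₀ + L₁` of two linear orders on `ℕ`, coded on `ℕ` via the computable
pairing `⟨0, l⟩ ↦ 2l`, `⟨1, l⟩ ↦ 2l + 1`. -/
def sumRel (r₀ r₁ : ℕ → ℕ → Prop) (m n : ℕ) : Prop :=
  (m % 2 = 0 ∧ n % 2 = 1) ∨
  (m % 2 = 0 ∧ n % 2 = 0 ∧ r₀ (m / 2) (n / 2)) ∨
  (m % 2 = 1 ∧ n % 2 = 1 ∧ r₁ (m / 2) (n / 2))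

/-- The lexicographic product `L₀ ×ₗ L₁` (first coordinate dominant) of two linear
orders on `ℕ`, coded on `ℕ` via the computable pairing `Nat.pair`. -/
def lexRel (r₀ r₁ : ℕ → ℕ → Prop) (m n : ℕ) : Prop :=
  r₀ m.unpair.1 n.unpair.1 ∨ (m.unpair.1 = n.unpair.1 ∧ r₁ m.unpair.2 n.unpair.2)

/-- The strict order of `ℕ + ℚ ×ₗ ℤ`. -/
def NQZlt : ℕ ⊕ ℚ × ℤ → ℕ ⊕ ℚ × ℤ → Prop :=
  Sum.Lex (· < ·) (Prod.Lex (· < ·) (· < ·))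

/-- The element of the cohesive power represented by the constant function `k`. -/
def constElt (C : Set ℕ) (k : ℕ) : CohPow C :=
  CohPow.mk ⟨fun _ => Part.some k, Partrec.const' (Part.some k), by
    have : (PFun.Dom fun _ : ℕ => Part.some k) = Set.univ := by
      ext n; simp [PFun.Dom]
    rw [this, Set.diff_univ]; exact Set.finite_empty⟩

/-- The element of the cohesive power represented by the identity function. -/
def idElt (C : Set ℕ) : CohPow C :=
  CohPow.mk ⟨fun n => Part.some n, Partrec.some, by
    have : (PFun.Dom fun n : ℕ => Part.some n) = Set.univ := by
      ext n; simp [PFun.Dom]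
    rw [this, Set.diff_univ]; exact Set.finite_empty⟩


namespace CohSumProof

variable {C : Set ℕ}

theorem exists_mk (x : CohPow C) : ∃ φ : CohCarrier C, x = CohPow.mk φ := by
  obtain ⟨φ, h⟩ := Quot.exists_rep x
  exact ⟨φ, h.symm⟩

theorem mk_eq_mk {φ ψ : CohCarrier C} (h : eqAE C φ.1 ψ.1) :
    CohPow.mk φ = CohPow.mk ψ := Quot.sound h

theorem eq_of_mk_eq {φ ψ : CohCarrier C} (h : CohPow.mk φ = CohPow.mk ψ) :
    eqAE C φ.1 ψ.1 := Quotient.exact h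

theorem eqAE_symm {φ ψ : ℕ →. ℕ} (h : eqAE C φ ψ) : eqAE C ψ φ :=
  h.subset fun n hn => ⟨hn.1, fun ⟨a, h1, h2⟩ => hn.2 ⟨a, h2, h1⟩⟩

theorem ltAE_congr {r : ℕ → ℕ → Prop} {φ φ' ψ ψ' : ℕ →. ℕ}
    (h1 : eqAE C φ φ') (h2 : eqAE C ψ ψ') (h : ltAE C r φ ψ) : ltAE C r φ' ψ' := by
  refine ((h1.union h2).union h).subset fun n hn => ?_
  by_cases e1 : ∃ a, a ∈ φ n ∧ a ∈ φ' n
  · by_cases e2 : ∃ a, a ∈ ψ n ∧ a ∈ ψ' n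
    · refine Or.inr ⟨hn.1, fun hw => hn.2 ?_⟩
      obtain ⟨a, b, ha, hb, hr⟩ := hw
      obtain ⟨a', ha1, ha2⟩ := e1
      obtain ⟨b', hb1, hb2⟩ := e2
      refine ⟨a', b', ha2, hb2, ?_⟩
      rwa [Part.mem_unique ha1 ha, Part.mem_unique hb1 hb]
    · exact Or.inl (Or.inr ⟨hn.1, e2⟩)
  · exact Or.inl (Or.inl ⟨hn.1, e1⟩)

theorem lt_mk_iff {r : ℕ → ℕ → Prop} (φ ψ : CohCarrier C) :
    CohPow.Lt C r (CohPow.mk φ) (CohPow.mk ψ) ↔ ltAE C r φ.1 ψ.1 := by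
  constructor
  · rintro ⟨φ', ψ', hx, hy, h⟩
    exact ltAE_congr (eqAE_symm (eq_of_mk_eq hx)) (eqAE_symm (eq_of_mk_eq hy)) h
  · exact fun h => ⟨φ, ψ, rfl, rfl, h⟩

/-- Post-composition with a computable total function. -/
def pmap (f : ℕ → ℕ) (hf : Computable f) (φ : CohCarrier C) : CohCarrier C :=
  ⟨fun n => (φ.1 n).map f, φ.2.1.map ((hf.comp Computable.snd).to₂), φ.2.2⟩

theorem mem_pmap_iff {f : ℕ → ℕ} {hf : Computable f} {φ : CohCarrier C} {n b : ℕ} :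
    b ∈ (pmap f hf φ).1 n ↔ ∃ a ∈ φ.1 n, f a = b := Part.mem_map_iff f

theorem eqAE_pmap (f : ℕ → ℕ) (hf : Computable f) {φ ψ : CohCarrier C}
    (h : eqAE C φ.1 ψ.1) : eqAE C (pmap f hf φ).1 (pmap f hf ψ).1 :=
  h.subset fun n hn => ⟨hn.1, fun ⟨a, h1, h2⟩ =>
    hn.2 ⟨f a, Part.mem_map f h1, Part.mem_map f h2⟩⟩

theorem comp_dbl0 : Computable fun a : ℕ => 2 * a :=
  (Primrec.nat_mul.comp (Primrec.const 2) Primrec.id).to_comp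
theorem comp_dbl1 : Computable fun a : ℕ => 2 * a + 1 :=
  (Primrec.succ.comp (Primrec.nat_mul.comp (Primrec.const 2) Primrec.id)).to_comp
theorem comp_hlf : Computable fun a : ℕ => a / 2 :=
  (Primrec.nat_div.comp Primrec.id (Primrec.const 2)).to_comp

def dbl0 : CohCarrier C → CohCarrier C := pmap (fun a => 2 * a) comp_dbl0
def dbl1 : CohCarrier C → CohCarrier C := pmap (fun a => 2 * a + 1) comp_dbl1
def hlf : CohCarrier C → CohCarrier C := pmap (fun a => a / 2) comp_hlf

/-- The embedding of the sum of the cohesive powers into the cohesive power of the sum. -/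
def sumMap (C : Set ℕ) : CohPow C ⊕ CohPow C → CohPow C :=
  Sum.elim
    (Quotient.lift (fun φ => CohPow.mk (dbl0 φ)) fun _ _ h => mk_eq_mk (eqAE_pmap _ _ h))
    (Quotient.lift (fun φ => CohPow.mk (dbl1 φ)) fun _ _ h => mk_eq_mk (eqAE_pmap _ _ h))

theorem sumMap_inl (φ : CohCarrier C) :
    sumMap C (Sum.inl (CohPow.mk φ)) = CohPow.mk (dbl0 φ) := rfl
theorem sumMap_inr (φ : CohCarrier C) :
    sumMap C (Sum.inr (CohPow.mk φ)) = CohPow.mk (dbl1 φ) := rfl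

theorem sumMap_injective (hCinf : C.Infinite) : Function.Injective (sumMap C) := by
  have evens : ∀ {φ : CohCarrier C} {n a : ℕ}, a ∈ (dbl0 φ).1 n → a % 2 = 0 := by
    rintro φ n a h
    obtain ⟨b, _, rfl⟩ := mem_pmap_iff.mp h
    omega
  have odds : ∀ {φ : CohCarrier C} {n a : ℕ}, a ∈ (dbl1 φ).1 n → a % 2 = 1 := by
    rintro φ n a h
    obtain ⟨b, _, rfl⟩ := mem_pmap_iff.mp h
    omega
  have mixed : ∀ {φ ψ : CohCarrier C},
      CohPow.mk (dbl0 φ) ≠ CohPow.mk (dbl1 ψ) := by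
    intro φ ψ h
    have h' := eq_of_mk_eq h
    refine hCinf (h'.subset fun n hn => ⟨hn, fun ⟨a, h1, h2⟩ => ?_⟩)
    have := evens h1
    have := odds h2
    omega
  rintro (x | x) (y | y) h
  · obtain ⟨φ, rfl⟩ := exists_mk x
    obtain ⟨ψ, rfl⟩ := exists_mk y
    rw [sumMap_inl, sumMap_inl] at h
    refine congrArg Sum.inl (mk_eq_mk ((eq_of_mk_eq h).subset fun n hn => ?_))
    refine ⟨hn.1, fun hw => hn.2 ?_⟩
    obtain ⟨a, h1, h2⟩ := hw
    obtain ⟨b, hb, hba⟩ := mem_pmap_iff.mp h1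
    obtain ⟨c, hc, hca⟩ := mem_pmap_iff.mp h2
    have hbc : b = c := by omega
    exact ⟨b, hb, hbc ▸ hc⟩
  · obtain ⟨φ, rfl⟩ := exists_mk x
    obtain ⟨ψ, rfl⟩ := exists_mk y
    exact absurd h mixed
  · obtain ⟨φ, rfl⟩ := exists_mk x
    obtain ⟨ψ, rfl⟩ := exists_mk y
    exact absurd h.symm mixed
  · obtain ⟨φ, rfl⟩ := exists_mk x
    obtain ⟨ψ, rfl⟩ := exists_mk y
    rw [sumMap_inr, sumMap_inr] at h
    refine congrArg Sum.inr (mk_eq_mk ((eq_of_mk_eq h).subset fun n hn => ?_))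
    refine ⟨hn.1, fun hw => hn.2 ?_⟩
    obtain ⟨a, h1, h2⟩ := hw
    obtain ⟨b, hb, hba⟩ := mem_pmap_iff.mp h1
    obtain ⟨c, hc, hca⟩ := mem_pmap_iff.mp h2
    have hbc : b = c := by omega
    exact ⟨b, hb, hbc ▸ hc⟩

theorem sumMap_surjective (hC : Cohesive C) : Function.Surjective (sumMap C) := by
  intro x
  obtain ⟨φ, rfl⟩ := exists_mk x
  set W : Set ℕ := {n | ∃ a, a ∈ φ.1 n ∧ a % 2 = 0} with hWdef
  have hWce : CESet W := by
    refine ⟨fun n => (φ.1 n).bind fun a =>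
      ((if a % 2 = 0 then some a else none : Option ℕ) : Part ℕ), ?_, ?_⟩
    · have hp : Primrec fun p : ℕ × ℕ =>
          (if p.2 % 2 = 0 then some p.2 else none : Option ℕ) := by
        refine Primrec.ite ?_ (Primrec.option_some.comp Primrec.snd) (Primrec.const none)
        exact Primrec.eq.comp
          (Primrec.nat_mod.comp Primrec.snd (Primrec.const 2)) (Primrec.const 0)
      exact φ.2.1.bind (Computable.ofOption hp.to_comp).to₂
    · ext n
      constructor
      · rintro ⟨a, ha, h2⟩
        refine Part.dom_iff_mem.mpr ⟨a, Part.mem_bind_iff.mpr ⟨a, ha, ?_⟩⟩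
        simp [h2]
      · intro hd
        obtain ⟨b, hb⟩ := Part.dom_iff_mem.mp hd
        obtain ⟨a, ha, hab⟩ := Part.mem_bind_iff.mp hb
        by_cases h2 : a % 2 = 0
        · exact ⟨a, ha, h2⟩
        · simp [h2] at hab
  rcases hC.2 W hWce with hfin | hfin
  · -- W ∩ C finite: almost all values odd
    refine ⟨Sum.inr (CohPow.mk (hlf φ)), ?_⟩
    rw [sumMap_inr]
    refine (mk_eq_mk ?_).symm
    refine ((hfin.union φ.2.2).subset fun n hn => ?_)
    by_cases hdom : n ∈ φ.1.Dom
    · obtain ⟨a, ha⟩ := Part.dom_iff_mem.mp hdom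
      by_cases h2 : a % 2 = 0
      · exact Or.inl ⟨⟨a, ha, h2⟩, hn.1⟩
      · exfalso
        refine hn.2 ⟨a, ha, ?_⟩
        have : 2 * (a / 2) + 1 = a := by omega
        exact this ▸ Part.mem_map _ (Part.mem_map _ ha)
    · exact Or.inr ⟨hn.1, hdom⟩
  · -- Wᶜ ∩ C finite: almost all values even
    refine ⟨Sum.inl (CohPow.mk (hlf φ)), ?_⟩
    rw [sumMap_inl]
    refine (mk_eq_mk ?_).symm
    refine hfin.subset fun n hn => ?_
    refine ⟨fun hW => ?_, hn.1⟩
    obtain ⟨a, ha, h2⟩ := hW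
    refine hn.2 ⟨a, ha, ?_⟩
    have : 2 * (a / 2) = a := by omega
    exact this ▸ Part.mem_map _ (Part.mem_map _ ha)


theorem lt_dbl0_dbl0 {r₀ r₁ : ℕ → ℕ → Prop} {φ ψ : CohCarrier C} :
    ltAE C (sumRel r₀ r₁) (dbl0 φ).1 (dbl0 ψ).1 ↔ ltAE C r₀ φ.1 ψ.1 := by
  constructor
  · intro h
    refine h.subset fun n hn => ⟨hn.1, fun hw => hn.2 ?_⟩
    obtain ⟨a, b, ha, hb, hr⟩ := hw
    obtain ⟨a', ha', rfl⟩ := mem_pmap_iff.mp ha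
    obtain ⟨b', hb', rfl⟩ := mem_pmap_iff.mp hb
    refine ⟨a', b', ha', hb', ?_⟩
    rcases hr with ⟨h1, h2⟩ | ⟨h1, h2, h3⟩ | ⟨h1, h2, h3⟩
    · omega
    · have e1 : 2 * a' / 2 = a' := by omega
      have e2 : 2 * b' / 2 = b' := by omega
      rwa [e1, e2] at h3
    · omega
  · intro h
    refine h.subset fun n hn => ⟨hn.1, fun ⟨a, b, ha, hb, hr⟩ => hn.2 ?_⟩
    refine ⟨2 * a, 2 * b, Part.mem_map _ ha, Part.mem_map _ hb,
      Or.inr (Or.inl ⟨by omega, by omega, ?_⟩)⟩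
    have e1 : 2 * a / 2 = a := by omega
    have e2 : 2 * b / 2 = b := by omega
    rw [e1, e2]; exact hr

theorem lt_dbl1_dbl1 {r₀ r₁ : ℕ → ℕ → Prop} {φ ψ : CohCarrier C} :
    ltAE C (sumRel r₀ r₁) (dbl1 φ).1 (dbl1 ψ).1 ↔ ltAE C r₁ φ.1 ψ.1 := by
  constructor
  · intro h
    refine h.subset fun n hn => ⟨hn.1, fun hw => hn.2 ?_⟩
    obtain ⟨a, b, ha, hb, hr⟩ := hw
    obtain ⟨a', ha', rfl⟩ := mem_pmap_iff.mp ha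
    obtain ⟨b', hb', rfl⟩ := mem_pmap_iff.mp hb
    refine ⟨a', b', ha', hb', ?_⟩
    rcases hr with ⟨h1, h2⟩ | ⟨h1, h2, h3⟩ | ⟨h1, h2, h3⟩
    · omega
    · omega
    · have e1 : (2 * a' + 1) / 2 = a' := by omega
      have e2 : (2 * b' + 1) / 2 = b' := by omega
      rwa [e1, e2] at h3
  · intro h
    refine h.subset fun n hn => ⟨hn.1, fun ⟨a, b, ha, hb, hr⟩ => hn.2 ?_⟩
    refine ⟨2 * a + 1, 2 * b + 1, Part.mem_map _ ha, Part.mem_map _ hb,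
      Or.inr (Or.inr ⟨by omega, by omega, ?_⟩)⟩
    have e1 : (2 * a + 1) / 2 = a := by omega
    have e2 : (2 * b + 1) / 2 = b := by omega
    rw [e1, e2]; exact hr

theorem lt_dbl0_dbl1 {r₀ r₁ : ℕ → ℕ → Prop} (φ ψ : CohCarrier C) :
    ltAE C (sumRel r₀ r₁) (dbl0 φ).1 (dbl1 ψ).1 := by
  refine (φ.2.2.union ψ.2.2).subset fun n hn => ?_
  by_cases h1 : n ∈ φ.1.Dom
  · by_cases h2 : n ∈ ψ.1.Dom
    · exfalso
      obtain ⟨a, ha⟩ := Part.dom_iff_mem.mp h1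
      obtain ⟨b, hb⟩ := Part.dom_iff_mem.mp h2
      exact hn.2 ⟨2 * a, 2 * b + 1, Part.mem_map _ ha, Part.mem_map _ hb,
        Or.inl ⟨by omega, by omega⟩⟩
    · exact Or.inr ⟨hn.1, h2⟩
  · exact Or.inl ⟨hn.1, h1⟩

theorem not_lt_dbl1_dbl0 {r₀ r₁ : ℕ → ℕ → Prop} (hCinf : C.Infinite)
    (φ ψ : CohCarrier C) : ¬ ltAE C (sumRel r₀ r₁) (dbl1 φ).1 (dbl0 ψ).1 := by
  intro h
  refine hCinf (h.subset fun n hn => ⟨hn, fun hw => ?_⟩)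
  obtain ⟨a, b, ha, hb, hr⟩ := hw
  obtain ⟨a', _, rfl⟩ := mem_pmap_iff.mp ha
  obtain ⟨b', _, rfl⟩ := mem_pmap_iff.mp hb
  rcases hr with ⟨h1, h2⟩ | ⟨h1, h2, h3⟩ | ⟨h1, h2, h3⟩ <;> omega

end CohSumProof

/-- The cohesive power of a sum of computable linear orders is the sum of the
cohesive powers. -/
theorem cohesivePower_sum (C : Set ℕ) (hC : Cohesive C)
    (r₀ r₁ : ℕ → ℕ → Prop) (hcomp₀ : ComputableRel r₀) (hcomp₁ : ComputableRel r₁)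
    (hsto₀ : IsStrictTotalOrder ℕ r₀) (hsto₁ : IsStrictTotalOrder ℕ r₁) :
    Nonempty (CohPow.Lt C (sumRel r₀ r₁) ≃r
      Sum.Lex (CohPow.Lt C r₀) (CohPow.Lt C r₁)) := by
  classical
  have hbij : Function.Bijective (CohSumProof.sumMap C) :=
    ⟨CohSumProof.sumMap_injective hC.1, CohSumProof.sumMap_surjective hC⟩
  refine ⟨RelIso.symm ⟨Equiv.ofBijective _ hbij, ?_⟩⟩
  rintro (x | x) (y | y) <;>
    [obtain ⟨φ, rfl⟩ := CohSumProof.exists_mk x; obtain ⟨φ, rfl⟩ := CohSumProof.exists_mk x;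
     obtain ⟨φ, rfl⟩ := CohSumProof.exists_mk x; obtain ⟨φ, rfl⟩ := CohSumProof.exists_mk x] <;>
    [obtain ⟨ψ, rfl⟩ := CohSumProof.exists_mk y; obtain ⟨ψ, rfl⟩ := CohSumProof.exists_mk y;
     obtain ⟨ψ, rfl⟩ := CohSumProof.exists_mk y; obtain ⟨ψ, rfl⟩ := CohSumProof.exists_mk y] <;>
    simp only [Equiv.ofBijective_apply, CohSumProof.sumMap_inl, CohSumProof.sumMap_inr,
      CohSumProof.lt_mk_iff]
  · rw [CohSumProof.lt_dbl0_dbl0, Sum.lex_inl_inl]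
    exact (CohSumProof.lt_mk_iff φ ψ).symm
  · simp only [iff_true_intro (Sum.Lex.sep _ _), iff_true]
    exact CohSumProof.lt_dbl0_dbl1 φ ψ
  · constructor
    · intro h
      exact absurd h (CohSumProof.not_lt_dbl1_dbl0 hC.1 φ ψ)
    · intro h
      cases h
  · rw [CohSumProof.lt_dbl1_dbl1, Sum.lex_inr_inr]
    exact (CohSumProof.lt_mk_iff φ ψ).symm
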